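/- Let V be a ℚ-vector space with an SL₂(ℤ)-action such that (u-1)³ = 0 and w² acts as 1, and let x = log u. Then wxwx² = -xwx² in End(V). -/

import Mathlib

open Matrix

def u : Matrix.SpecialLinearGroup (Fin 2) ℤ :=
  ⟨!![1, 1; 0, 1], by simp [Matrix.det_fin_two_of]⟩

def w : Matrix.SpecialLinearGroup (Fin 2) ℤ :=
  ⟨!![0, 1; -1, 0], by simp [Matrix.det_fin_two_of]⟩

/-- If `(u-1)³ = 0` and `w²` acts as `1`, then with `x = log u` one has
`wxwx² = -xwx²` in `End(V)`. -/
theorem cubic_plus_wxwx2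
    (V : Type*) [AddCommGroup V] [Module ℚ V]
    (ρ : Representation ℚ (Matrix.SpecialLinearGroup (Fin 2) ℤ) V)
    (hcub : (ρ u - 1) ^ 3 = 0)
    (hi : ρ (w ^ 2) = 1)
    (x : Module.End ℚ V)
    (hx : x = (ρ u - 1) - (2⁻¹ : ℚ) • (ρ u - 1) ^ 2) :
    ρ w * x * ρ w * x ^ 2 = -(x * ρ w * x ^ 2) := by
  set A := ρ u with hA
  set B := ρ w with hB
  set n : Module.End ℚ V := A - 1 with hn
  have hn3 : n ^ 3 = 0 := hcub
  have hB2 : B * B = 1 := by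
    rw [hB, ← _root_.map_mul, ← sq, hi]
  have hwu3 : (w * u) ^ 3 = 1 := by
    ext i j
    fin_cases i <;> fin_cases j <;>
      simp [u, w, pow_succ, Matrix.mul_apply, Fin.sum_univ_succ] <;> rfl
  have hrel : B * A * B * A * B * A = 1 := by
    have h := map_pow ρ (w * u) 3
    rw [hwu3, _root_.map_one, _root_.map_mul, ← hA, ← hB] at h
    calc B * A * B * A * B * A = (B * A) ^ 3 := by noncomm_ring
      _ = 1 := h.symm
  set A' : Module.End ℚ V := 1 - n + n ^ 2 with hA'
  have hAeq : A = 1 + n := by rw [hn]; noncomm_ring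
  have hAA' : A * A' = 1 := by
    have h : A * A' = 1 + n ^ 3 := by rw [hAeq, hA']; noncomm_ring
    rw [h, hn3, add_zero]
  have hA'A : A' * A = 1 := by
    have h : A' * A = 1 + n ^ 3 := by rw [hAeq, hA']; noncomm_ring
    rw [h, hn3, add_zero]
  have h1 : A * B * A * B * A = B := by
    have := congrArg (fun z => B * z) hrel
    simpa [← mul_assoc, hB2] using this
  have h2 : B * A * B * A = A' * B := by
    have := congrArg (fun z => A' * z) h1
    simpa [← mul_assoc, hA'A] using this
  have h3 : B * A * B = A' * B * A' := by
    have := congrArg (fun z => z * A') h2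
    simpa [mul_assoc, hAA'] using this
  have h4 : B * A' * B = A * B * A := by
    have e : A * B = B * A' * B * A' := by
      have := congrArg (fun z => B * z) h3
      simp only [← mul_assoc, hB2, one_mul] at this
      exact this
    have := congrArg (fun z => z * A) e
    simpa [mul_assoc, hA'A] using this.symm
  have hnn2 : n * n ^ 2 = 0 := by rw [← pow_succ', hn3]
  have hn2n : n ^ 2 * n = 0 := by rw [← pow_succ, hn3]
  have hn22 : n ^ 2 * n ^ 2 = 0 := by
    calc n ^ 2 * n ^ 2 = n ^ 3 * n := by noncomm_ring
      _ = 0 := by rw [hn3, zero_mul]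
  have E1 : B * (n * (B * n ^ 2))
      = B * n ^ 2 - n * (B * n ^ 2) + n ^ 2 * (B * n ^ 2) - n ^ 2 := by
    have e := congrArg (fun z => z * n ^ 2) h3
    calc B * (n * (B * n ^ 2))
        = B * A * B * n ^ 2 - B * B * n ^ 2 := by rw [hAeq]; noncomm_ring
      _ = A' * B * A' * n ^ 2 - B * B * n ^ 2 := by rw [e]
      _ = A' * (B * (A' * n ^ 2)) - n ^ 2 := by rw [hB2, one_mul]; noncomm_ring
      _ = A' * (B * n ^ 2) - n ^ 2 := by
            have h5 : A' * n ^ 2 = n ^ 2 := by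
              rw [hA', add_mul, sub_mul, one_mul, hn22, add_zero, hnn2, sub_zero]
            rw [h5]
      _ = B * n ^ 2 - n * (B * n ^ 2) + n ^ 2 * (B * n ^ 2) - n ^ 2 := by
            rw [hA']; noncomm_ring
  have E2 : B * (n ^ 2 * (B * n ^ 2))
      = B * n ^ 2 + B * n ^ 2 + n ^ 2 * (B * n ^ 2) - n ^ 2 - n ^ 2 := by
    have e := congrArg (fun z => z * n ^ 2) h4
    have eL : B * A' * B * n ^ 2
        = n ^ 2 - B * (n * (B * n ^ 2)) + B * (n ^ 2 * (B * n ^ 2)) := by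
      calc B * A' * B * n ^ 2
          = B * B * n ^ 2 - B * (n * (B * n ^ 2)) + B * (n ^ 2 * (B * n ^ 2)) := by
            rw [hA']; noncomm_ring
        _ = _ := by rw [hB2, one_mul]
    have eR : A * B * A * n ^ 2 = B * n ^ 2 + n * (B * n ^ 2) := by
      have hAn2 : A * n ^ 2 = n ^ 2 := by
        rw [hAeq, add_mul, one_mul, hnn2, add_zero]
      calc A * B * A * n ^ 2 = A * (B * (A * n ^ 2)) := by noncomm_ring
        _ = A * (B * n ^ 2) := by rw [hAn2]
        _ = B * n ^ 2 + n * (B * n ^ 2) := by rw [hAeq]; noncomm_ring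
    rw [eL, eR, E1] at e
    linear_combination (norm := noncomm_ring) e
  have hxn : x = n - (2⁻¹ : ℚ) • n ^ 2 := hx
  have hx2 : x ^ 2 = n ^ 2 := by
    rw [hxn, sq]
    simp only [mul_sub, sub_mul, smul_mul_assoc, mul_smul_comm, smul_smul,
      hnn2, hn2n, hn22, smul_zero, sub_zero]
    exact (sq n).symm
  rw [hx2, hxn]
  simp only [sub_mul, mul_sub, smul_mul_assoc, mul_smul_comm, mul_assoc]
  rw [E1, E2]
  module
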